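/- Let G be a finite group, F a nilpotent normal subgroup with trivial centralizer intersection properties, and x_r an element of prime order r such that ⟨x_r⟩F is normal in G and C_G(x_r) ∩ F = 1. Then G = N_G(⟨x_r⟩)F, N_G(⟨x_r⟩) ∩ F = 1, and G/(C_G(x_r)F) is cyclic of order dividing r − 1. -/

import Mathlib

/-- Auxiliary: the multiplicative automorphism group of `Multiplicative A` is
isomorphic to the additive automorphism group of `A`. -/
def mulAutMultiplicativeEquiv (A : Type*) [AddGroup A] :
    MulAut (Multiplicative A) ≃* Multiplicative (AddAut A) :=
  MulAutMultiplicative A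

lemma Subgroup.eq_of_le_of_card_le' {G : Type*} [Group G] [Finite G] {H K : Subgroup G}
    (hle : H ≤ K) (h : Nat.card K ≤ Nat.card H) : H = K := by
  have h1 : Nat.card (H.subgroupOf K) = Nat.card H :=
    Nat.card_congr (Subgroup.subgroupOfEquivOfLe hle).toEquiv
  have h2 : H.subgroupOf K = ⊤ := Subgroup.eq_top_of_le_card _ (by omega)
  exact le_antisymm hle (Subgroup.subgroupOf_eq_top.mp h2)

theorem stmt12 {G : Type*} [Group G] [Finite G]
    (F : Subgroup G) (hFn : F.Normal) (hFnil : Group.IsNilpotent F)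
    (r : ℕ) (hr : r.Prime) (x_r : G) (hord : orderOf x_r = r)
    (hnorm : ((Subgroup.zpowers x_r) ⊔ F).Normal)
    (hint : Subgroup.centralizer {x_r} ⊓ F = ⊥) :
    (∀ g : G, ∃ n f : G, n ∈ Subgroup.normalizer (Subgroup.zpowers x_r : Set G) ∧ f ∈ F ∧ g = n * f) ∧
    Subgroup.normalizer (Subgroup.zpowers x_r : Set G) ⊓ F = ⊥ ∧
    ∃ hn : (Subgroup.centralizer {x_r} ⊔ F).Normal,
      (letI := hn;
        IsCyclic (G ⧸ (Subgroup.centralizer {x_r} ⊔ F)) ∧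
        Nat.card (G ⧸ (Subgroup.centralizer {x_r} ⊔ F)) ∣ r - 1) := by
  haveI hrf : Fact r.Prime := ⟨hr⟩
  haveI := hFn
  haveI := hnorm
  have hx1 : x_r ≠ 1 := by
    intro h
    rw [h, orderOf_one] at hord
    exact hr.one_lt.ne' hord.symm
  have hxC : x_r ∈ Subgroup.centralizer {x_r} :=
    Subgroup.mem_centralizer_iff.mpr (by rintro g rfl; rfl)
  have hxF : x_r ∉ F := by
    intro h
    have : x_r ∈ Subgroup.centralizer {x_r} ⊓ F := ⟨hxC, h⟩
    rw [hint] at this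
    exact hx1 this
  have hcardz : Nat.card (Subgroup.zpowers x_r) = r := by
    rw [Nat.card_zpowers, hord]
  -- Step 1 : `zpowers x_r ⊓ F = ⊥`
  have hbZ : Subgroup.zpowers x_r ⊓ F = ⊥ := by
    have hdvd : Nat.card (Subgroup.zpowers x_r ⊓ F : Subgroup G) ∣ r := by
      rw [← hcardz]; exact Subgroup.card_dvd_of_le inf_le_left
    rcases (Nat.Prime.eq_one_or_self_of_dvd hr _ hdvd) with h1 | h1
    · exact Subgroup.card_eq_one.mp h1
    · exfalso
      have heq := Subgroup.eq_of_le_of_card_le'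
        (inf_le_left : Subgroup.zpowers x_r ⊓ F ≤ Subgroup.zpowers x_r)
        (le_of_eq (by rw [hcardz, h1]))
      have hle : Subgroup.zpowers x_r ≤ F := heq ▸ inf_le_right
      exact hxF (hle (Subgroup.mem_zpowers x_r))
  -- Step 2 : `r` does not divide `Nat.card F`
  have hrF : ¬ (r ∣ Nat.card F) := by
    intro hdvd
    obtain ⟨R⟩ : Nonempty (Sylow r F) := inferInstance
    have hRnorm : (R : Subgroup F).Normal :=
      Sylow.normal_of_normalizerCondition (normalizerCondition_of_isNilpotent) R
    haveI := hRnorm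
    haveI : (R : Subgroup F).Characteristic := R.characteristic_of_normal hRnorm
    set R' : Subgroup G := (R : Subgroup F).map F.subtype with hR'def
    haveI hR'norm : R'.Normal := inferInstance
    have hcardR' : Nat.card R' = Nat.card (R : Subgroup F) :=
      Nat.card_congr (Subgroup.equivMapOfInjective _ _ F.subtype_injective).symm.toEquiv
    have hrR' : r ∣ Nat.card R' := by
      rw [hcardR', R.card_eq_multiplicity]
      exact dvd_pow_self r (Nat.Prime.factorization_pos_of_dvd hr Nat.card_pos.ne' hdvd).ne'
    letI act : MulAction (Subgroup.zpowers x_r) R' :=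
      MulAction.compHom _ ((MulAut.conjNormal (H := R')).comp (Subgroup.zpowers x_r).subtype)
    have hPgrp : IsPGroup r (Subgroup.zpowers x_r) :=
      IsPGroup.of_card (by rw [Nat.card_zpowers, hord, pow_one])
    have hmod := hPgrp.card_modEq_card_fixedPoints (α := R')
    have hfix1 : (1 : R') ∈ MulAction.fixedPoints (Subgroup.zpowers x_r) R' := by
      intro g
      show ((MulAut.conjNormal (H := R')).comp (Subgroup.zpowers x_r).subtype) g • (1 : R') = 1
      simp
    have hrfix : r ∣ Nat.card (MulAction.fixedPoints (Subgroup.zpowers x_r) R') :=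
      (Nat.modEq_zero_iff_dvd.mp ((hmod.symm.trans (Nat.modEq_zero_iff_dvd.mpr hrR'))))
    have hcardpos : 0 < Nat.card (MulAction.fixedPoints (Subgroup.zpowers x_r) R') :=
      Nat.card_pos_iff.mpr ⟨⟨⟨1, hfix1⟩⟩, Set.Finite.to_subtype (Set.toFinite _)⟩
    have h2le : 2 ≤ Nat.card (MulAction.fixedPoints (Subgroup.zpowers x_r) R') :=
      le_trans hr.two_le (Nat.le_of_dvd hcardpos hrfix)
    have : Nontrivial (MulAction.fixedPoints (Subgroup.zpowers x_r) R') :=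
      Finite.one_lt_card_iff_nontrivial.mp h2le
    obtain ⟨f, hf⟩ := exists_ne (⟨(1 : R'), hfix1⟩ :
        MulAction.fixedPoints (Subgroup.zpowers x_r) R')
    have hfval : (f : R') ≠ 1 := fun h => hf (Subtype.ext h)
    have hfixed := f.2 ⟨x_r, Subgroup.mem_zpowers x_r⟩
    have hconj : x_r * ((f : R') : G) * x_r⁻¹ = ((f : R') : G) := by
      have h1 : MulAut.conjNormal (H := R') x_r (f : R') = (f : R') := hfixed
      simpa using congrArg Subtype.val h1
    have hfC : ((f : R') : G) ∈ Subgroup.centralizer {x_r} := by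
      refine Subgroup.mem_centralizer_iff.mpr ?_
      rintro g rfl
      calc g * ((f : R') : G) = (g * ((f : R') : G) * g⁻¹) * g := by group
      _ = ((f : R') : G) * g := by rw [hconj]
    have hfF : ((f : R') : G) ∈ F := Subgroup.map_subtype_le _ (f : R').2
    have : ((f : R') : G) ∈ Subgroup.centralizer {x_r} ⊓ F := ⟨hfC, hfF⟩
    rw [hint] at this
    exact hfval (Subtype.ext (by simpa using this))
  -- Step 3 : Frattini argument, `N_G(⟨x_r⟩) ⊔ F = ⊤`
  have htop : Subgroup.normalizer (Subgroup.zpowers x_r : Set G) ⊔ F = ⊤ := by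
    set K := Subgroup.zpowers x_r ⊔ F with hKdef
    have hFK : F ≤ K := le_sup_right
    have hcardFK : Nat.card (F.subgroupOf K) = Nat.card F :=
      Nat.card_congr (Subgroup.subgroupOfEquivOfLe hFK).toEquiv
    have hrel : F.relIndex K = r := by
      rw [hKdef, Subgroup.relIndex_sup_right, Subgroup.relIndex,
        Subgroup.subgroupOf_eq_bot.mpr (disjoint_iff.mpr (by rw [inf_comm, hbZ])),
        Subgroup.index_bot, hcardz]
    have hcardK : Nat.card K = r * Nat.card F := by
      have h := Subgroup.index_mul_card (F.subgroupOf K)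
      rw [hcardFK] at h
      rw [← h]
      congr 1
    have hxK : x_r ∈ K := Subgroup.mem_sup_left (Subgroup.mem_zpowers x_r)
    set x' : K := ⟨x_r, hxK⟩ with hx'def
    have hordx' : orderOf x' = r := by
      rw [← hord]
      exact Subgroup.orderOf_mk x_r hxK
    have hPx : IsPGroup r (Subgroup.zpowers x' : Subgroup K) :=
      IsPGroup.of_card (by rw [Nat.card_zpowers, hordx', pow_one])
    obtain ⟨Q, hQle⟩ := hPx.exists_le_sylow
    have hfact : (Nat.card K).factorization r = 1 := by
      rw [hcardK, Nat.factorization_mul hr.pos.ne' Nat.card_pos.ne', Finsupp.add_apply,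
        hr.factorization_self, Nat.factorization_eq_zero_of_not_dvd hrF]
    have hcardQ : Nat.card Q = r := by
      rw [Q.card_eq_multiplicity, hfact, pow_one]
    have hQeq : (Q : Subgroup K) = Subgroup.zpowers x' :=
      (Subgroup.eq_of_le_of_card_le' hQle
        (by rw [hcardQ, Nat.card_zpowers, hordx'])).symm
    have hfr := Sylow.normalizer_sup_eq_top (p := r) (N := K) Q
    have hmapz : Subgroup.map K.subtype (Subgroup.zpowers x') = Subgroup.zpowers x_r := by
      rw [MonoidHom.map_zpowers]
      rfl
    rw [show ((Q : Subgroup K).map K.subtype) = Subgroup.zpowers x_r by rw [hQeq, hmapz]] at hfr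
    rw [hKdef, ← sup_assoc, sup_eq_left.mpr Subgroup.le_normalizer] at hfr
    exact hfr
  -- first conclusion
  have hNF : ∀ g : G, ∃ n f : G,
      n ∈ Subgroup.normalizer (Subgroup.zpowers x_r : Set G) ∧ f ∈ F ∧ g = n * f := by
    intro g
    have hg : g ∈ ((Subgroup.normalizer (Subgroup.zpowers x_r : Set G) ⊔ F : Subgroup G) : Set G) := by
      rw [htop]; trivial
    rw [Subgroup.mul_normal] at hg
    obtain ⟨a, ha, b, hb, hab⟩ := hg
    exact ⟨a, b, ha, hb, hab.symm⟩
  -- second conclusion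
  have hNFbot : Subgroup.normalizer (Subgroup.zpowers x_r : Set G) ⊓ F = ⊥ := by
    rw [eq_bot_iff]
    rintro f ⟨hfN, hfF⟩
    have h1 : f * x_r * f⁻¹ ∈ Subgroup.zpowers x_r :=
      (Subgroup.mem_normalizer_iff.mp hfN x_r).mp (Subgroup.mem_zpowers x_r)
    have hc : f * x_r * f⁻¹ * x_r⁻¹ ∈ Subgroup.zpowers x_r ⊓ F := by
      constructor
      · exact mul_mem h1 ((Subgroup.zpowers x_r).inv_mem (Subgroup.mem_zpowers x_r))
      · have hm : x_r * f⁻¹ * x_r⁻¹ ∈ F := hFn.conj_mem _ (inv_mem hfF) _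
        have := mul_mem hfF hm
        convert this using 1
        group
        exact Iff.rfl
    rw [hbZ] at hc
    have hcomm : f * x_r * f⁻¹ = x_r := mul_inv_eq_one.mp (Subgroup.mem_bot.mp hc)
    have hfC : f ∈ Subgroup.centralizer {x_r} := by
      refine Subgroup.mem_centralizer_iff.mpr ?_
      rintro g rfl
      have := congrArg (· * f) hcomm
      simpa [mul_assoc] using this.symm
    have : f ∈ Subgroup.centralizer {x_r} ⊓ F := ⟨hfC, hfF⟩
    rw [hint] at this
    exact this
  refine ⟨hNF, hNFbot, ?_⟩
  -- third conclusion
  set π := QuotientGroup.mk' F with hπdef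
  set y : G ⧸ F := π x_r with hydef
  have hyne : y ≠ 1 := fun h => hxF ((QuotientGroup.eq_one_iff x_r).mp h)
  have hyord : orderOf y = r := by
    have hdvd : orderOf y ∣ r := hord ▸ orderOf_map_dvd π x_r
    rcases (hr.eq_one_or_self_of_dvd _ hdvd) with h | h
    · exact absurd (orderOf_eq_one_iff.mp h) hyne
    · exact h
  set Z := Subgroup.zpowers y with hZdef
  have hmapK : Subgroup.map π (Subgroup.zpowers x_r ⊔ F) = Z := by
    rw [Subgroup.map_sup, MonoidHom.map_zpowers]
    have hb : Subgroup.map π F = ⊥ := by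
      rw [eq_bot_iff]
      rintro q ⟨g, hg, rfl⟩
      exact Subgroup.mem_bot.mpr ((QuotientGroup.eq_one_iff g).mpr hg)
    rw [hb, sup_bot_eq]
  haveI hZnorm : Z.Normal := by
    rw [← hmapK]
    exact Subgroup.Normal.map hnorm π (QuotientGroup.mk'_surjective F)
  set Φ : G →* MulAut Z := (MulAut.conjNormal (H := Z)).comp π with hΦdef
  have hker : Φ.ker = Subgroup.centralizer {x_r} ⊔ F := by
    refine le_antisymm ?_ (sup_le ?_ ?_)
    · intro g hg
      obtain ⟨n, f, hn, hf, rfl⟩ := hNF g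
      have hΦf : Φ f = 1 := by
        show MulAut.conjNormal (π f) = 1
        rw [show π f = 1 from (QuotientGroup.eq_one_iff f).mpr hf, map_one]
      have hΦn : Φ n = 1 := by
        have h := MonoidHom.mem_ker.mp hg
        rw [map_mul, hΦf, mul_one] at h
        exact h
      have h1 : π n * y * (π n)⁻¹ = y := by
        have h2 := congrArg Subtype.val
          (congrArg (fun σ : MulAut Z => σ ⟨y, Subgroup.mem_zpowers y⟩) hΦn)
        simpa [hΦdef] using h2
      have h2 : n * x_r * n⁻¹ * x_r⁻¹ ∈ F := by
        apply (QuotientGroup.eq_one_iff _).mp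
        show π (n * x_r * n⁻¹ * x_r⁻¹) = 1
        rw [map_mul, map_mul, map_mul, map_inv, map_inv]
        rw [show π x_r = y from rfl, h1, mul_inv_cancel]
      have h3 : n * x_r * n⁻¹ * x_r⁻¹ ∈ Subgroup.zpowers x_r :=
        mul_mem ((Subgroup.mem_normalizer_iff.mp hn x_r).mp (Subgroup.mem_zpowers x_r))
          ((Subgroup.zpowers x_r).inv_mem (Subgroup.mem_zpowers x_r))
      have h4 : n * x_r * n⁻¹ = x_r := by
        have hmem : n * x_r * n⁻¹ * x_r⁻¹ ∈ Subgroup.zpowers x_r ⊓ F := ⟨h3, h2⟩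
        rw [hbZ] at hmem
        exact mul_inv_eq_one.mp (Subgroup.mem_bot.mp hmem)
      have hnC : n ∈ Subgroup.centralizer {x_r} := by
        refine Subgroup.mem_centralizer_iff.mpr ?_
        rintro g rfl
        have := congrArg (· * n) h4
        simpa [mul_assoc] using this.symm
      exact mul_mem (Subgroup.mem_sup_left hnC) (Subgroup.mem_sup_right hf)
    · intro c hc
      rw [MonoidHom.mem_ker]
      show MulAut.conjNormal (π c) = 1
      refine MulEquiv.ext fun z => ?_
      obtain ⟨w, hw⟩ := z
      obtain ⟨k, rfl⟩ := Subgroup.mem_zpowers_iff.mp hw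
      apply Subtype.ext
      have hcomm : Commute (π c) y := by
        have hcx : Commute x_r c := Subgroup.mem_centralizer_iff.mp hc x_r rfl
        exact ((hcx.map π).symm : Commute (π c) (π x_r))
      show π c * y ^ k * (π c)⁻¹ = y ^ k
      rw [(hcomm.zpow_right k).eq, mul_inv_cancel_right]
    · intro f hf
      rw [MonoidHom.mem_ker]
      show MulAut.conjNormal (π f) = 1
      rw [show π f = 1 from (QuotientGroup.eq_one_iff f).mpr hf, map_one]
  haveI hDnorm : (Subgroup.centralizer {x_r} ⊔ F).Normal := hker ▸ MonoidHom.normal_ker Φ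
  have hZcard : Nat.card Z = r := by rw [hZdef, Nat.card_zpowers, hyord]
  haveI hZcyc : IsCyclic Z := isCyclic_of_prime_card hZcard
  have e2 : Multiplicative (ZMod r) ≃* Z :=
    mulEquivOfPrimeCardEq ((Nat.card_congr Multiplicative.toAdd).trans (Nat.card_zmod r)) hZcard
  have e : MulAut Z ≃* (ZMod r)ˣ :=
    ((MulAut.congr e2.symm).trans (mulAutMultiplicativeEquiv (ZMod r))).trans
      (AddEquiv.toMultiplicativeLeft (ZMod.AddAutEquivUnits r))
  haveI : IsCyclic (MulAut Z) := isCyclic_of_surjective e.symm e.symm.surjective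
  haveI : IsCyclic Φ.range := inferInstance
  have e5 := QuotientGroup.quotientKerEquivRange Φ
  have hQcard : Nat.card (G ⧸ Φ.ker) = Nat.card Φ.range := Nat.card_congr e5.toEquiv
  have e6 : (G ⧸ Φ.ker) ≃* (G ⧸ (Subgroup.centralizer {x_r} ⊔ F)) :=
    QuotientGroup.quotientMulEquivOfEq hker
  refine ⟨hDnorm, ?_, ?_⟩
  · haveI hcyc : IsCyclic (G ⧸ Φ.ker) := isCyclic_of_surjective e5.symm e5.symm.surjective
    exact isCyclic_of_surjective e6 e6.surjective
  · have hq : Nat.card (G ⧸ (Subgroup.centralizer {x_r} ⊔ F)) = Nat.card Φ.range :=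
      (Nat.card_congr e6.symm.toEquiv).trans hQcard
    have hdvd1 : Nat.card Φ.range ∣ Nat.card (MulAut Z) :=
      Subgroup.card_subgroup_dvd_card Φ.range
    have hcardAut : Nat.card (MulAut Z) = r - 1 := by
      rw [IsCyclic.card_mulAut, hZcard, Nat.totient_prime hr]
    rw [hq]
    rwa [hcardAut] at hdvd1
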